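/- Let K ⊆ M be closed convex, σ ∈ ∂K, and ν in the normal cone of K at σ. Suppose there exist a unit vector n ∈ ℝ³ and a nonzero vector d ∈ ℝ³ such that ν = (d ⊗ n + n ⊗ d)/2. Then σn lies on the boundary of the convex set K(n) := {τn : τ ∈ K} ⊆ ℝ³, and d lies in the normal cone of K(n) at σn. -/
import Mathlib


open Matrix

lemma trace_helper (A : Matrix (Fin 3) (Fin 3) ℝ) (hA : A.IsSymm) (n d : Fin 3 → ℝ) :
    Matrix.trace (Aᵀ * ((1/2 : ℝ) • (vecMulVec d n + vecMulVec n d)))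
      = (A *ᵥ n) ⬝ᵥ d := by
  have hs : ∀ i j, A j i = A i j := fun i j => by
    conv_lhs => rw [← hA]
    rfl
  simp only [Matrix.trace, Matrix.diag, Matrix.mul_apply, Matrix.smul_apply,
    Matrix.add_apply, vecMulVec_apply, Matrix.transpose_apply, dotProduct, mulVec,
    smul_eq_mul, Finset.mul_sum]
  simp only [Fin.sum_univ_three, Finset.sum_mul]
  rw [hs 0 1, hs 0 2, hs 1 2]
  ring

/-- If `σ ∈ K` (a closed convex set of symmetric matrices) and `ν` is in the
normal cone of `K` at `σ` (w.r.t. the trace inner product), and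
`ν = (d⊗n + n⊗d)/2` for a unit vector `n` and a nonzero `d`, then the stress
vector `σn` lies on the boundary of `K(n) = {τn : τ ∈ K}` and `d` lies in the
normal cone of `K(n)` at `σn`. -/
theorem jump_compatible_normal_gives_boundary_stress_vector
    (K : Set (Matrix (Fin 3) (Fin 3) ℝ))
    (hK_symm : ∀ τ ∈ K, τ.IsSymm)
    (hK_closed : IsClosed K) (hK_conv : Convex ℝ K)
    (σ : Matrix (Fin 3) (Fin 3) ℝ) (hσK : σ ∈ K)
    (ν : Matrix (Fin 3) (Fin 3) ℝ)
    (hnc : ∀ τ ∈ K, (0 : ℝ) ≤ Matrix.trace ((σ - τ)ᵀ * ν))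
    (n d : Fin 3 → ℝ) (hn : n ⬝ᵥ n = 1) (hd : d ≠ 0)
    (hν : ν = (1/2 : ℝ) • (vecMulVec d n + vecMulVec n d)) :
    σ *ᵥ n ∈ frontier {v | ∃ τ ∈ K, τ *ᵥ n = v}
    ∧ ∀ τ ∈ K, (0 : ℝ) ≤ (σ *ᵥ n - τ *ᵥ n) ⬝ᵥ d := by
  have key : ∀ τ ∈ K, (0 : ℝ) ≤ (σ *ᵥ n - τ *ᵥ n) ⬝ᵥ d := by
    intro τ hτ
    have hsym : (σ - τ).IsSymm := (hK_symm σ hσK).sub (hK_symm τ hτ)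
    have := hnc τ hτ
    rw [hν, trace_helper _ hsym] at this
    rwa [← Matrix.sub_mulVec]
  refine ⟨?_, key⟩
  have hmem : σ *ᵥ n ∈ {v | ∃ τ ∈ K, τ *ᵥ n = v} := ⟨σ, hσK, rfl⟩
  rw [frontier, Set.mem_diff]
  refine ⟨subset_closure hmem, ?_⟩
  intro hint
  rw [mem_interior_iff_mem_nhds, Metric.mem_nhds_iff] at hint
  obtain ⟨ε, hε, hball⟩ := hint
  have hdn : ‖d‖ ≠ 0 := norm_ne_zero_iff.mpr hd
  set c : ℝ := ε / (2 * ‖d‖) with hc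
  have hcpos : 0 < c := div_pos hε (by positivity)
  have hvmem : σ *ᵥ n + c • d ∈ {v | ∃ τ ∈ K, τ *ᵥ n = v} := by
    apply hball
    simp only [Metric.mem_ball, dist_eq_norm]
    have : σ *ᵥ n + c • d - σ *ᵥ n = c • d := by abel
    rw [this, norm_smul, Real.norm_eq_abs, abs_of_pos hcpos, hc]
    rw [div_mul_eq_mul_div, mul_comm 2 ‖d‖, ← div_div, mul_div_assoc]
    rw [div_self hdn, mul_one]
    linarith
  obtain ⟨τ, hτK, hτn⟩ := hvmem
  have h1 := key τ hτK
  rw [hτn] at h1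
  have hdd : (0:ℝ) < d ⬝ᵥ d := by
    have hnn : (0:ℝ) ≤ d ⬝ᵥ d :=
      Finset.sum_nonneg fun i _ => mul_self_nonneg (d i)
    rcases lt_or_eq_of_le hnn with h | h
    · exact h
    · exact absurd ((dotProduct_self_eq_zero).mp h.symm) hd
  have : (σ *ᵥ n - (σ *ᵥ n + c • d)) ⬝ᵥ d = -c * (d ⬝ᵥ d) := by
    simp only [dotProduct, Pi.sub_apply, Pi.add_apply, Pi.smul_apply, smul_eq_mul,
      Finset.mul_sum]
    apply Finset.sum_congr rfl
    intro i _
    ring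
  rw [this] at h1
  nlinarith
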